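/- If ã < ᾱ, u(ᾱ, ᾱ) ≥ u(ã, ᾱ), then u(ã, ã) < u(g*(ã), ã). (Case 2 and Case 3 of the Nash equilibrium classification are mutually exclusive.) -/

import Mathlib

/-- if ã < ᾱ and u(ᾱ, ᾱ) ≥ u(ã, ᾱ), then u(ã, ã) < u(g*(ã), ã):
Case 2 and Case 3 of the Nash equilibrium classification are mutually exclusive. -/
theorem case2_excludes_case3 (s i r a k atil c : ℝ) (hs : 0 ≤ s) (hi : 0 < i)
    (hr : 0 < r) (ha : 0 < a) (ha1 : a ≤ 1) (hk : 0 < k) (hc : 0 < c)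
    (hat : atil ∈ Set.Ioo (0:ℝ) 1) (G gstar : ℝ → ℝ)
    (hG : ∀ α, G α = k * α * i / (α * s + α * i + a * r))
    (hgstar : ∀ α, gstar α = 1 / (1 + G α))
    (u : ℝ → ℝ → ℝ)
    (hu : ∀ α am, u α am =
      Real.log α - α + 1 - (if atil < α then c else 0) - α * G am)
    (abar : ℝ) (habar : abar ∈ Set.Ioc (0:ℝ) 1) (hfix : gstar abar = abar)
    (hlt : atil < abar) (hcase2 : u abar abar ≥ u atil abar) :
    u atil atil < u (gstar atil) atil := by
  obtain ⟨hat0, hat1⟩ := hat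
  obtain ⟨hab0, hab1⟩ := habar
  set bA := G atil with hbA
  set bB := G abar with hbB
  have hdenA : 0 < atil * s + atil * i + a * r := by
    nlinarith [mul_nonneg hat0.le hs, mul_pos hat0 hi, mul_pos ha hr]
  have hdenB : 0 < abar * s + abar * i + a * r := by
    nlinarith [mul_nonneg hab0.le hs, mul_pos hab0 hi, mul_pos ha hr]
  have hbApos : 0 < bA := by
    rw [hbA, hG]
    exact div_pos (by positivity) hdenA
  have hAB : bA < bB := by
    rw [hbA, hbB, hG, hG, div_lt_div_iff₀ hdenA hdenB]
    nlinarith [mul_pos (mul_pos hk hi) (mul_pos (mul_pos ha hr) (sub_pos.mpr hlt))]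
  have h1A : (0:ℝ) < 1 + bA := by linarith
  have h1B : (0:ℝ) < 1 + bB := by linarith
  have hfix' : abar * (1 + bB) = 1 := by
    have h := hfix
    rw [hgstar abar] at h
    rw [← hbB] at h
    field_simp at h
    linarith
  set g := gstar atil with hg
  have hgval : g = 1 / (1 + bA) := by rw [hg, hgstar]
  have hgpos : 0 < g := by rw [hgval]; positivity
  have habg : abar < g := by
    rw [hgval, show abar = 1 / (1 + bB) by field_simp; linarith]
    exact one_div_lt_one_div_of_lt h1A (by linarith)
  have hatg : atil < g := hlt.trans habg
  have hne : abar * (1 + bA) ≠ 1 := by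
    intro h; nlinarith
  have hlog1 : Real.log (abar * (1 + bA)) < abar * (1 + bA) - 1 :=
    Real.log_lt_sub_one_of_pos (by positivity) hne
  rw [Real.log_mul (ne_of_gt hab0) (ne_of_gt h1A)] at hlog1
  have hlogg : Real.log g = - Real.log (1 + bA) := by
    rw [hgval, one_div, Real.log_inv]
  have hgmul : g * (1 + bA) = 1 := by rw [hgval]; field_simp
  have hc2 : Real.log abar - abar + 1 - c - abar * bB ≥
      Real.log atil - atil + 1 - 0 - atil * bB := by
    have h1 := hcase2
    rw [hu abar abar, hu atil abar] at h1
    rw [if_pos hlt, if_neg (lt_irrefl atil)] at h1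
    linarith
  have stepB : (abar - atil) * (bB - bA) > 0 :=
    mul_pos (by linarith) (by linarith)
  rw [hu atil atil, hu g atil, if_neg (lt_irrefl atil), if_pos hatg]
  nlinarith [hlog1, hlogg, hgmul, hc2, stepB]
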